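/- arXiv:2201.06646 — 3 statements merged into one kernel-verified Lean document; each statement's English description precedes it below -/
import Mathlib

section
/- Let k be a field of characteristic 2 and n ≥ 2. In the ring R = k[x,y,z]/(z^2 + x^2 y + x y^n + x y z) (the D_{2n}^{n-1} singularity), the maps v₁ = y∂/∂y + (x + z + n y^{n-1})∂/∂z and v₂ = x∂/∂x + (z + y^{n-1})∂/∂z are well-defined k-derivations of R. -/
open MvPolynomial

/-- For the `D_{2n}^{n-1}` singularity `f = z² + x²y + xyⁿ + xyz` in characteristic 2,
the derivations `v₁ = y ∂/∂y + (x + z + n yⁿ⁻¹) ∂/∂z` and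
`v₂ = x ∂/∂x + (z + yⁿ⁻¹) ∂/∂z` send `f` into the ideal `(f)`,
hence descend to `k[x,y,z]/(f)`. -/
theorem D2n_derivations_descend {k : Type*} [Field k] [CharP k 2] (n : ℕ) (hn : 2 ≤ n) :
    ∀ f : MvPolynomial (Fin 3) k,
      f = X 2 ^ 2 + X 0 ^ 2 * X 1 + X 0 * X 1 ^ n + X 0 * X 1 * X 2 →
      (X 1 * pderiv (1 : Fin 3) f
          + (X 0 + X 2 + (n : MvPolynomial (Fin 3) k) * X 1 ^ (n - 1)) * pderiv (2 : Fin 3) f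
        ∈ Ideal.span {f}) ∧
      (X 0 * pderiv (0 : Fin 3) f + (X 2 + X 1 ^ (n - 1)) * pderiv (2 : Fin 3) f
        ∈ Ideal.span {f}) := by
  obtain ⟨m, rfl⟩ : ∃ m, n = m + 2 := ⟨n - 2, by omega⟩
  intro f hf
  subst hf
  have h2 : (2 : MvPolynomial (Fin 3) k) = 0 := by
    have h : ((2 : ℕ) : k) = 0 := CharP.cast_eq_zero k 2
    rw [show (2 : MvPolynomial (Fin 3) k) = ((2:ℕ) : MvPolynomial (Fin 3) k) by norm_cast,
      ← map_natCast (C : k →+* MvPolynomial (Fin 3) k), h, map_zero]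
  constructor
  · refine Ideal.mem_span_singleton.mpr ⟨0, ?_⟩
    rw [mul_zero]
    have e : X 1 * pderiv (1 : Fin 3)
          ((X 2:MvPolynomial (Fin 3) k) ^ 2 + X 0 ^ 2 * X 1 + X 0 * X 1 ^ (m+2) + X 0 * X 1 * X 2)
        + (X 0 + X 2 + ((m+2 : ℕ) : MvPolynomial (Fin 3) k) * X 1 ^ (m + 2 - 1)) *
          pderiv (2 : Fin 3)
          ((X 2:MvPolynomial (Fin 3) k) ^ 2 + X 0 ^ 2 * X 1 + X 0 * X 1 ^ (m+2) + X 0 * X 1 * X 2)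
        = 2 * (X 0 ^ 2 * X 1 + ((m+2 : ℕ) : MvPolynomial (Fin 3) k) * X 0 * X 1 ^ (m + 2)
            + X 0 * X 1 * X 2 + X 0 * X 2 + X 2 ^ 2
            + ((m+2 : ℕ) : MvPolynomial (Fin 3) k) * X 1 ^ (m + 1) * X 2) := by
      simp [pderiv_X]
      ring
    rw [e, h2, zero_mul]
  · refine Ideal.mem_span_singleton.mpr ⟨0, ?_⟩
    rw [mul_zero]
    have e : X 0 * pderiv (0 : Fin 3)
          ((X 2:MvPolynomial (Fin 3) k) ^ 2 + X 0 ^ 2 * X 1 + X 0 * X 1 ^ (m+2) + X 0 * X 1 * X 2)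
        + (X 2 + X 1 ^ (m + 2 - 1)) * pderiv (2 : Fin 3)
          ((X 2:MvPolynomial (Fin 3) k) ^ 2 + X 0 ^ 2 * X 1 + X 0 * X 1 ^ (m+2) + X 0 * X 1 * X 2)
        = 2 * (X 0 ^ 2 * X 1 + X 0 * X 1 ^ (m + 2) + X 0 * X 1 * X 2 + X 2 ^ 2
            + X 1 ^ (m + 1) * X 2) := by
      simp [pderiv_X]
      ring
    rw [e, h2, zero_mul]
end

section
/- Let k be a field of characteristic 5. For f = z^2 + x^3 + y^5 + x y^4 (the E_8^1 singularity in characteristic 5), f^4 does not lie in the ideal (x^5, y^5, z^5) of k[x,y,z]; hence this singularity is F-pure by Fedder's criterion. -/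
open MvPolynomial

private lemma coeff_XXX {k : Type*} [Field k] (a b c a' b' c' : ℕ) :
    coeff (Finsupp.single 0 a + Finsupp.single 1 b + Finsupp.single 2 c)
      (X 0 ^ a' * X 1 ^ b' * X 2 ^ c' : MvPolynomial (Fin 3) k)
      = if a = a' ∧ b = b' ∧ c = c' then 1 else 0 := by
  rw [X_pow_eq_monomial, X_pow_eq_monomial, X_pow_eq_monomial, monomial_mul, monomial_mul,
    coeff_monomial]
  have : (Finsupp.single (0 : Fin 3) a' + Finsupp.single 1 b' + Finsupp.single 2 c'
      = Finsupp.single 0 a + Finsupp.single 1 b + Finsupp.single 2 c) ↔ (a = a' ∧ b = b' ∧ c = c') := by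
    constructor
    · intro h
      refine ⟨?_, ?_, ?_⟩
      · have := DFunLike.congr_fun h 0; simpa using this.symm
      · have := DFunLike.congr_fun h 1; simpa using this.symm
      · have := DFunLike.congr_fun h 2; simpa using this.symm
    · rintro ⟨rfl, rfl, rfl⟩; rfl
  rw [if_congr this rfl rfl]
  split <;> simp

set_option maxHeartbeats 2000000 in
/-- In characteristic 5, the `E₈¹` polynomial `f = z² + x³ + y⁵ + xy⁴` satisfies
`f⁴ ∉ (x⁵, y⁵, z⁵)`, so by Fedder's criterion the singularity is F-pure. -/
theorem E81_char5_Fpure {k : Type*} [Field k] [CharP k 5] :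
    (X 2 ^ 2 + X 0 ^ 3 + X 1 ^ 5 + X 0 * X 1 ^ 4 : MvPolynomial (Fin 3) k) ^ 4
      ∉ Ideal.span {(X 0 ^ 5 : MvPolynomial (Fin 3) k), X 1 ^ 5, X 2 ^ 5} := by
  intro h
  set m : Fin 3 →₀ ℕ := Finsupp.single 0 4 + Finsupp.single 1 4 + Finsupp.single 2 4 with hm
  -- the monomial x⁴y⁴z⁴ is not ≥ single i 5 for any i
  have hnle : ∀ i : Fin 3, ¬ Finsupp.single i 5 ≤ m := by
    intro i hle
    have h5 := hle i
    fin_cases i <;> simp [hm, Finsupp.single_apply] at h5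
  -- any element of the ideal has zero coefficient at m
  have hcoeff0 : coeff m ((X 2 ^ 2 + X 0 ^ 3 + X 1 ^ 5 + X 0 * X 1 ^ 4 :
      MvPolynomial (Fin 3) k) ^ 4) = 0 := by
    rw [show ({(X 0 ^ 5 : MvPolynomial (Fin 3) k), X 1 ^ 5, X 2 ^ 5} : Set _)
        = insert (X 0 ^ 5) (insert (X 1 ^ 5) {X 2 ^ 5}) from rfl] at h
    rw [Ideal.mem_span_insert] at h
    obtain ⟨p, w, hw, hrep⟩ := h
    rw [Ideal.mem_span_insert] at hw
    obtain ⟨q, w', hw', hrep'⟩ := hw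
    rw [Ideal.mem_span_singleton] at hw'
    obtain ⟨r, hr⟩ := hw'
    rw [hrep, hrep', hr, mul_comm (X 2 ^ 5) r]
    have hz : ∀ (i : Fin 3) (p : MvPolynomial (Fin 3) k), coeff m (p * X i ^ 5) = 0 := by
      intro i p
      rw [X_pow_eq_monomial, coeff_mul_monomial', if_neg (hnle i)]
    simp only [coeff_add, hz, add_zero, zero_add]
  have hexp : ((X 2 ^ 2 + X 0 ^ 3 + X 1 ^ 5 + X 0 * X 1 ^ 4 : MvPolynomial (Fin 3) k)) ^ 4
      = X 0 ^ 0 * X 1 ^ 0 * X 2 ^ 8 +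
      C 4 * (X 0 ^ 0 * X 1 ^ 5 * X 2 ^ 6) +
      C 6 * (X 0 ^ 0 * X 1 ^ 10 * X 2 ^ 4) +
      C 4 * (X 0 ^ 0 * X 1 ^ 15 * X 2 ^ 2) +
      X 0 ^ 0 * X 1 ^ 20 * X 2 ^ 0 +
      C 4 * (X 0 ^ 1 * X 1 ^ 4 * X 2 ^ 6) +
      C 12 * (X 0 ^ 1 * X 1 ^ 9 * X 2 ^ 4) +
      C 12 * (X 0 ^ 1 * X 1 ^ 14 * X 2 ^ 2) +
      C 4 * (X 0 ^ 1 * X 1 ^ 19 * X 2 ^ 0) +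
      C 6 * (X 0 ^ 2 * X 1 ^ 8 * X 2 ^ 4) +
      C 12 * (X 0 ^ 2 * X 1 ^ 13 * X 2 ^ 2) +
      C 6 * (X 0 ^ 2 * X 1 ^ 18 * X 2 ^ 0) +
      C 4 * (X 0 ^ 3 * X 1 ^ 0 * X 2 ^ 6) +
      C 12 * (X 0 ^ 3 * X 1 ^ 5 * X 2 ^ 4) +
      C 12 * (X 0 ^ 3 * X 1 ^ 10 * X 2 ^ 2) +
      C 4 * (X 0 ^ 3 * X 1 ^ 12 * X 2 ^ 2) +
      C 4 * (X 0 ^ 3 * X 1 ^ 15 * X 2 ^ 0) +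
      C 4 * (X 0 ^ 3 * X 1 ^ 17 * X 2 ^ 0) +
      C 12 * (X 0 ^ 4 * X 1 ^ 4 * X 2 ^ 4) +
      C 24 * (X 0 ^ 4 * X 1 ^ 9 * X 2 ^ 2) +
      C 12 * (X 0 ^ 4 * X 1 ^ 14 * X 2 ^ 0) +
      X 0 ^ 4 * X 1 ^ 16 * X 2 ^ 0 +
      C 12 * (X 0 ^ 5 * X 1 ^ 8 * X 2 ^ 2) +
      C 12 * (X 0 ^ 5 * X 1 ^ 13 * X 2 ^ 0) +
      C 6 * (X 0 ^ 6 * X 1 ^ 0 * X 2 ^ 4) +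
      C 12 * (X 0 ^ 6 * X 1 ^ 5 * X 2 ^ 2) +
      C 6 * (X 0 ^ 6 * X 1 ^ 10 * X 2 ^ 0) +
      C 4 * (X 0 ^ 6 * X 1 ^ 12 * X 2 ^ 0) +
      C 12 * (X 0 ^ 7 * X 1 ^ 4 * X 2 ^ 2) +
      C 12 * (X 0 ^ 7 * X 1 ^ 9 * X 2 ^ 0) +
      C 6 * (X 0 ^ 8 * X 1 ^ 8 * X 2 ^ 0) +
      C 4 * (X 0 ^ 9 * X 1 ^ 0 * X 2 ^ 2) +
      C 4 * (X 0 ^ 9 * X 1 ^ 5 * X 2 ^ 0) +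
      C 4 * (X 0 ^ 10 * X 1 ^ 4 * X 2 ^ 0) +
      X 0 ^ 12 * X 1 ^ 0 * X 2 ^ 0 := by
    simp only [map_ofNat]
    ring
  rw [hexp] at hcoeff0
  simp only [coeff_add, coeff_C_mul, coeff_XXX, hm] at hcoeff0
  norm_num at hcoeff0
  have h12 : (12 : k) ≠ 0 := by
    have := (CharP.cast_eq_zero_iff k 5 12).not.mpr (by decide)
    simpa using this
  exact h12 hcoeff0
end

section
/- Let k = F_9 with generator a satisfying a^2 = a + 1, and let f = y^2 z - x(x - a z)(x + z) ∈ k[x,y,z]. Then the maps x∂/∂x + y∂/∂y + z∂/∂z (the Euler derivation) and a^5 y ∂/∂x + (x + a^6 z) ∂/∂y are well-defined k-derivations of R = k[x,y,z]/(f). -/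
open MvPolynomial

/-- Over `k = F₉` with generator `a` satisfying `a² = a + 1`, for the cone
`f = y²z - x(x - az)(x + z)`, the Euler derivation `x∂ₓ + y∂ᵧ + z∂_z` and the
derivation `a⁵y ∂ₓ + (x + a⁶z) ∂ᵧ` send `f` into the ideal `(f)`, hence are
well-defined derivations of `R = k[x,y,z]/(f)`. -/
theorem F9_cone_derivations_descend (a : GaloisField 3 2) (ha : a ^ 2 = a + 1) :
    ∀ f : MvPolynomial (Fin 3) (GaloisField 3 2),
      f = X 1 ^ 2 * X 2 - X 0 * (X 0 - C a * X 2) * (X 0 + X 2) →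
      (X 0 * pderiv (0 : Fin 3) f + X 1 * pderiv (1 : Fin 3) f
          + X 2 * pderiv (2 : Fin 3) f ∈ Ideal.span {f}) ∧
      (C (a ^ 5) * X 1 * pderiv (0 : Fin 3) f
          + (X 0 + C (a ^ 6) * X 2) * pderiv (1 : Fin 3) f ∈ Ideal.span {f}) := by
  intro f hf
  have h3p : (3 : MvPolynomial (Fin 3) (GaloisField 3 2)) = 0 := CharP.cast_eq_zero _ 3
  have haC : (C a : MvPolynomial (Fin 3) (GaloisField 3 2)) ^ 2 = C a + 1 := by
    rw [← C_pow, ha]; simp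
  subst hf
  constructor
  · simp only [map_sub, map_mul, map_add, pderiv_X, map_pow, Derivation.leibniz,
      Derivation.leibniz_pow, Pi.single_apply, smul_eq_mul, C_pow,
      if_neg (by decide : ¬ ((2:Fin 3) = 0)), if_neg (by decide : ¬ ((2:Fin 3) = 1)),
      if_neg (by decide : ¬ ((1:Fin 3) = 2)), if_neg (by decide : ¬ ((0:Fin 3) = 2)),
      if_neg (by decide : ¬ ((1:Fin 3) = 0)), if_neg (by decide : ¬ ((0:Fin 3) = 1)), pderiv_C,
      if_pos rfl, if_true, ite_true, eq_self_iff_true]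
    rw [Ideal.mem_span_singleton]
    refine ⟨0, ?_⟩
    linear_combination (X 1 ^ 2 * X 2 - X 0 * (X 0 - C a * X 2) * (X 0 + X 2)) * h3p
  · simp only [map_sub, map_mul, map_add, pderiv_X, map_pow, Derivation.leibniz,
      Derivation.leibniz_pow, Pi.single_apply, smul_eq_mul, C_pow,
      if_neg (by decide : ¬ ((2:Fin 3) = 0)), if_neg (by decide : ¬ ((2:Fin 3) = 1)),
      if_neg (by decide : ¬ ((1:Fin 3) = 2)), if_neg (by decide : ¬ ((0:Fin 3) = 2)),
      if_neg (by decide : ¬ ((1:Fin 3) = 0)), if_neg (by decide : ¬ ((0:Fin 3) = 1)), pderiv_C,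
      if_pos rfl, if_true, ite_true, eq_self_iff_true]
    rw [Ideal.mem_span_singleton]
    refine ⟨0, ?_⟩
    linear_combination (-(X 0 * X 1 * X 2) * ((C a)^4 + (C a)^2 + C a + 2)) * haC
      + ((C a)^6 * X 1 * X 2^2 - C a * X 0 * X 1 * X 2 + (C a)^6 * X 1 * X 2 * X 0 - (C a)^5 * X 1 * X 2 * X 0 - (C a)^5 * X 1 * X 0^2) * h3p
end
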